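/- Let (X,Π) be a d-dimensional regular measured poset and τ ∈ X(i) with i ≤ k < d. Then the non-expansion of the link indicator under the upper walk satisfies exactly ⟨𝟙_{X^k_τ}, D_{k+1}U_k 𝟙_{X^k_τ}⟩ / ⟨𝟙_{X^k_τ}, 𝟙_{X^k_τ}⟩ = ⟨U_k 𝟙_{X^k_τ}, U_k 𝟙_{X^k_τ}⟩ / ⟨𝟙_{X^k_τ}, 𝟙_{X^k_τ}⟩ = R(k,i) / R(k+1,i), using ⟨U_k 𝟙_{X^k_τ}, U_k 𝟙_{X^k_τ}⟩ = (R(k,i)²/R(k+1,i)) π_i(τ). -/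

import Mathlib

open Finset

attribute [local instance] Classical.propDecidable

/-- The up operator: `(U g)(y) = (1 / R (r y)) ∑_{x ⋖ y} g x`. -/
noncomputable def Uop {X : Type*} [Fintype X] [PartialOrder X]
    (r : X → ℕ) (R : ℕ → ℕ) (g : X → ℝ) : X → ℝ :=
  fun y => (1 / (R (r y) : ℝ)) * ∑ x ∈ univ.filter (fun x => x ⋖ y), g x

/-- The down operator: `(D f)(x) = (1 / (R (r x + 1) · π x)) ∑_{y ⋗ x} π y · f y`. -/
noncomputable def Dop {X : Type*} [Fintype X] [PartialOrder X]
    (r : X → ℕ) (R : ℕ → ℕ) (π : X → ℝ) (f : X → ℝ) : X → ℝ :=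
  fun x => (1 / ((R (r x + 1) : ℝ) * π x)) * ∑ y ∈ univ.filter (fun y => x ⋖ y), π y * f y

/-- The weighted inner product on level `k`. -/
noncomputable def ip {X : Type*} [Fintype X] [PartialOrder X]
    (r : X → ℕ) (π : X → ℝ) (k : ℕ) (f g : X → ℝ) : ℝ :=
  ∑ τ ∈ univ.filter (fun τ => r τ = k), π τ * f τ * g τ

/-- Number of saturated (cover) chains from `x` down to `y`. -/
noncomputable def chainCount {X : Type*} [PartialOrder X] (x y : X) : ℕ :=
  Nat.card {l : List X // l.Chain' (fun a b => b ⋖ a) ∧ l.head? = some x ∧ l.getLast? = some y}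

set_option linter.unusedSectionVars false

section ChainAux
variable {X : Type*} [PartialOrder X]

lemma chain_last_le : ∀ (l : List X) (a b : X),
    l.Chain' (fun p q : X => q ⋖ p) → l.head? = some a → l.getLast? = some b → b ≤ a
  | [], a, b => by simp
  | [x], a, b => by
      intro _ h1 h2
      simp only [List.head?_cons, Option.some_inj] at h1
      simp only [List.getLast?_singleton, Option.some_inj] at h2
      subst h1; subst h2; exact le_rfl
  | x :: y :: t, a, b => by
      intro hc h1 h2
      have hxa : x = a := by simpa using h1
      have hyx : y ⋖ x := (List.isChain_cons_cons.mp hc).1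
      have hc' := (List.isChain_cons_cons.mp hc).2
      have h2' : (y :: t).getLast? = some b := by
        rw [← h2]; exact List.getLast?_cons_cons.symm
      have := chain_last_le (y :: t) y b hc' rfl h2'
      exact hxa ▸ (this.trans hyx.le)

lemma chain_nodup (l : List X) (hc : l.Chain' (fun p q : X => q ⋖ p)) : l.Nodup := by
  have hlt : l.Chain' (fun p q : X => q < p) := hc.imp fun _ _ h => h.lt
  haveI : IsTrans X (fun p q : X => q < p) := ⟨fun a b c h1 h2 => h2.trans h1⟩
  have hp : l.Pairwise (fun p q : X => q < p) := List.isChain_iff_pairwise.mp hlt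
  exact hp.imp (fun hab => (ne_of_lt hab).symm)

end ChainAux

section CC
variable {X : Type*} [Fintype X] [PartialOrder X]

lemma chain_set_finite (x y : X) :
    Finite {l : List X // l.Chain' (fun a b => b ⋖ a) ∧ l.head? = some x ∧ l.getLast? = some y} := by
  have hsub : {l : List X | l.Chain' (fun a b => b ⋖ a) ∧ l.head? = some x ∧ l.getLast? = some y}
      ⊆ {l : List X | l.length ≤ Fintype.card X} :=
    fun l hl => (chain_nodup l hl.1).length_le_card
  exact ((List.finite_length_le X (Fintype.card X)).subset hsub).to_subtype

lemma chainCount_self (x : X) : chainCount x x = 1 := by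
  rw [chainCount, Nat.card_eq_one_iff_unique]
  constructor
  · constructor
    rintro ⟨l, hc, hh, hl⟩ ⟨l', hc', hh', hl'⟩
    have key : ∀ (m : List X), m.Chain' (fun a b => b ⋖ a) → m.head? = some x →
        m.getLast? = some x → m = [x] := by
      rintro (_ | ⟨a, (_ | ⟨c, t⟩)⟩) hc hh hl
      · simp at hh
      · simpa using hh
      · exfalso
        have ha : a = x := by simpa using hh
        have hcx : c ⋖ a := (List.isChain_cons_cons.mp hc).1
        have hlast : (c :: t).getLast? = some x := by
          rw [← hl]; exact List.getLast?_cons_cons.symm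
        have hle : x ≤ c := chain_last_le (c :: t) c x (List.isChain_cons_cons.mp hc).2 rfl hlast
        exact absurd (hle.trans_lt (ha ▸ hcx.lt)) (lt_irrefl x)
    simp only [Subtype.mk.injEq]
    rw [key l hc hh hl, key l' hc' hh' hl']
  · exact ⟨⟨[x], List.isChain_singleton _, by simp, by simp⟩⟩

lemma chainCount_of_not_le (x y : X) (h : ¬ y ≤ x) : chainCount x y = 0 := by
  rw [chainCount]
  have : IsEmpty {l : List X // l.Chain' (fun a b => b ⋖ a) ∧ l.head? = some x ∧ l.getLast? = some y} := by
    constructor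
    rintro ⟨l, hc, hh, hl⟩
    exact h (chain_last_le l x y hc hh hl)
  exact Nat.card_of_isEmpty

lemma chainCount_rec (y b : X) (hyb : y ≠ b) :
    chainCount y b = ∑ x ∈ univ.filter (fun x => x ⋖ y), chainCount x b := by
  classical
  let Ch : X → Type _ := fun x =>
    {l : List X // l.Chain' (fun a b => b ⋖ a) ∧ l.head? = some x ∧ l.getLast? = some b}
  haveI hFin : ∀ x : X, Fintype (Ch x) := fun x => @Fintype.ofFinite _ (chain_set_finite x b)
  let f : (Σ x : {x : X // x ⋖ y}, Ch x.1) → Ch y := fun p =>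
    ⟨y :: p.2.1, by
      refine List.isChain_cons.mpr ⟨?_, p.2.2.1⟩
      intro c hcl
      rw [p.2.2.2.1] at hcl
      have hcx : (p.1 : X) = c := by simpa using hcl
      rw [← hcx]; exact p.1.2, rfl, by
      exact Option.mem_def.mp (List.mem_getLast?_cons (Option.mem_def.mpr p.2.2.2.2))⟩
  have hbij : Function.Bijective f := by
    constructor
    · rintro ⟨⟨x1, hx1⟩, ⟨l1, h1⟩⟩ ⟨⟨x2, hx2⟩, ⟨l2, h2⟩⟩ h
      have hl : l1 = l2 := by
        have := congrArg (fun q => (q : Ch y).1) h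
        simpa [f] using this
      subst hl
      have hx : x1 = x2 := by
        have e1 := h1.2.1; have e2 := h2.2.1
        rw [e1] at e2; simpa using Option.some_inj.mp e2
      subst hx
      rfl
    · rintro ⟨l, hc, hh, hl⟩
      match l, hc, hh, hl with
      | [], hc, hh, hl => simp at hh
      | [a], hc, hh, hl =>
        exfalso
        have ha : a = y := by simpa using hh
        have hb : a = b := by simpa using hl
        exact hyb (ha ▸ hb ▸ rfl)
      | a :: c :: t, hc, hh, hl =>
        have ha : a = y := by simpa using hh
        subst ha
        have hcy : c ⋖ a := (List.isChain_cons_cons.mp hc).1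
        refine ⟨⟨⟨c, hcy⟩, ⟨c :: t, (List.isChain_cons_cons.mp hc).2, rfl, ?_⟩⟩, ?_⟩
        · rw [← hl]; exact List.getLast?_cons_cons.symm
        · rfl
  have h1 : chainCount y b = Nat.card (Σ x : {x : X // x ⋖ y}, Ch x.1) :=
    (Nat.card_congr (Equiv.ofBijective f hbij)).symm
  rw [h1, Nat.card_eq_fintype_card, Fintype.card_sigma]
  have h2 : ∀ x : {x : X // x ⋖ y}, Fintype.card (Ch x.1) = chainCount x.1 b := by
    intro x
    rw [chainCount, Nat.card_eq_fintype_card]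
  rw [Finset.sum_congr rfl (fun x _ => h2 x)]
  exact (Finset.sum_subtype (univ.filter (fun x => x ⋖ y)) (by simp) (fun x => chainCount x b)).symm

end CC

/-- **Non-expansion of a link under the upper walk.** For a rank-`i` element `τ` with
indicator `χ = 𝟙_{X^k_τ}` of its `k`-dimensional link:
`⟨χ, D_{k+1}U_k χ⟩ = ⟨U_k χ, U_k χ⟩ = (R(k,i)²/R(k+1,i)) π τ`, whence
`⟨χ, D_{k+1}U_k χ⟩ / ⟨χ, χ⟩ = R(k,i)/R(k+1,i)`. -/
theorem link_nonexpansion_upper_walk {X : Type*} [Fintype X] [PartialOrder X]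
    (d : ℕ) (r : X → ℕ) (π : X → ℝ) (R : ℕ → ℕ) (m' : ℕ → ℕ → ℕ)
    (i k : ℕ) (hik : i ≤ k) (hkd : k < d)
    (hrd : ∀ x, r x ≤ d)
    (hmono : ∀ x y : X, x < y → r x < r y)
    (hcov : ∀ x y : X, x ⋖ y → r y = r x + 1)
    (hπ : ∀ x, 0 ≤ π x)
    (hdown : ∀ y : X, 1 ≤ r y → (univ.filter (fun x => x ⋖ y)).card = R (r y))
    (hRpos : ∀ j, 1 ≤ j → j ≤ d → 0 < R j)
    (hmid : ∀ x y : X, y < x → chainCount x y = m' (r x) (r y))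
    (hmposk : 0 < m' k i) (hmposk1 : 0 < m' (k + 1) i)
    (Rki : ℕ) (hRki : m' k i * Rki = ∏ j ∈ Finset.Icc (i + 1) k, R j)
    (Rk1i : ℕ) (hRk1i : m' (k + 1) i * Rk1i = ∏ j ∈ Finset.Icc (i + 1) (k + 1), R j)
    (hmarg : ∀ j, i ≤ j → j ≤ k → ∀ x : X, r x = j →
      (R (j + 1) : ℝ) * π x = ∑ y ∈ univ.filter (fun y => x ⋖ y), π y)
    (τ : X) (hτ : r τ = i)
    (χ : X → ℝ) (hχ : χ = fun y => if τ ≤ y then (1 : ℝ) else 0) :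
    ip r π k χ (Dop r R π (Uop r R χ)) = ip r π (k + 1) (Uop r R χ) (Uop r R χ) ∧
    ip r π (k + 1) (Uop r R χ) (Uop r R χ) = ((Rki : ℝ) ^ 2 / (Rk1i : ℝ)) * π τ ∧
    ip r π k χ (Dop r R π (Uop r R χ)) = ((Rki : ℝ) / (Rk1i : ℝ)) * ip r π k χ χ := by
  classical
  subst hχ
  -- counting identity per element of X^{j+1}_τ
  have hcount : ∀ j, i ≤ j → ∀ y : X, τ ≤ y → r y = j + 1 →
      (if j = i then 1 else m' j i) * (univ.filter (fun x => x ⋖ y ∧ τ ≤ x)).card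
        = m' (j + 1) i := by
    intro j hij y hτy hry
    have hτney : τ ≠ y := by
      intro h; rw [h] at hτ; omega
    have hτlty : τ < y := lt_of_le_of_ne hτy hτney
    have h1 : m' (j + 1) i = chainCount y τ := by
      rw [hmid y τ hτlty, hry, hτ]
    rw [h1, chainCount_rec y τ (Ne.symm hτney)]
    have h2 : ∀ x ∈ univ.filter (fun x => x ⋖ y), chainCount x τ
        = if τ ≤ x then (if j = i then 1 else m' j i) else 0 := by
      intro x hx
      simp only [mem_filter, mem_univ, true_and] at hx
      have hrx : r x = j := by have := hcov x y hx; omega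
      by_cases hτx : τ ≤ x
      · rw [if_pos hτx]
        by_cases hxτ : x = τ
        · subst hxτ
          have : j = i := by rw [← hrx, hτ]
          rw [if_pos this, chainCount_self]
        · have hlt : τ < x := lt_of_le_of_ne hτx (Ne.symm hxτ)
          have hji : j ≠ i := by
            have := hmono τ x hlt; rw [hτ, hrx] at this; omega
          rw [if_neg hji, hmid x τ hlt, hrx, hτ]
      · rw [if_neg hτx, chainCount_of_not_le x τ hτx]
    rw [Finset.sum_congr rfl h2, Finset.sum_ite, Finset.sum_const_zero, add_zero,
      Finset.sum_const, Finset.filter_filter, smul_eq_mul, mul_comm]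
  -- level masses
  set S : ℕ → ℝ := fun j => ∑ x ∈ univ.filter (fun x => r x = j ∧ τ ≤ x), π x with hS
  have hSi : S i = π τ := by
    have hfil : univ.filter (fun x => r x = i ∧ τ ≤ x) = {τ} := by
      ext x
      simp only [mem_filter, mem_univ, true_and, mem_singleton]
      constructor
      · rintro ⟨hrx, hτx⟩
        by_contra hne
        have := hmono τ x (lt_of_le_of_ne hτx (Ne.symm hne))
        omega
      · rintro rfl; exact ⟨hτ, le_rfl⟩
    rw [hS]
    simp only [hfil, Finset.sum_singleton]
  have hrec : ∀ j, i ≤ j → j ≤ k →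
      ((if j = i then 1 else m' j i : ℕ) : ℝ) * ((R (j+1) : ℝ) * S j)
        = (m' (j + 1) i : ℝ) * S (j + 1) := by
    intro j hij hjk
    have step1 : (R (j+1) : ℝ) * S j
        = ∑ x ∈ univ.filter (fun x => r x = j ∧ τ ≤ x),
            ∑ y ∈ univ.filter (fun y => x ⋖ y), π y := by
      rw [hS, Finset.mul_sum]
      refine Finset.sum_congr rfl ?_
      intro x hx
      simp only [mem_filter, mem_univ, true_and] at hx
      exact hmarg j hij hjk x hx.1
    have step2 : ∑ x ∈ univ.filter (fun x => r x = j ∧ τ ≤ x),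
            ∑ y ∈ univ.filter (fun y => x ⋖ y), π y
        = ∑ y ∈ univ.filter (fun y => r y = j + 1 ∧ τ ≤ y),
            ∑ x ∈ univ.filter (fun x => x ⋖ y ∧ τ ≤ x), π y := by
      rw [Finset.sum_comm' (t' := univ.filter (fun y => r y = j + 1 ∧ τ ≤ y))
        (s' := fun y => univ.filter (fun x => x ⋖ y ∧ τ ≤ x))]
      intro x y
      simp only [mem_filter, mem_univ, true_and]
      constructor
      · rintro ⟨⟨hrx, hτx⟩, hxy⟩
        exact ⟨⟨hxy, hτx⟩, by rw [hcov x y hxy, hrx], hτx.trans hxy.le⟩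
      · rintro ⟨⟨hxy, hτx⟩, hry, hτy⟩
        refine ⟨⟨?_, hτx⟩, hxy⟩
        have := hcov x y hxy; omega
    rw [step1, step2, Finset.mul_sum, Finset.mul_sum]
    refine Finset.sum_congr rfl ?_
    intro y hy
    simp only [mem_filter, mem_univ, true_and] at hy
    have hcnt := hcount j hij y hy.2 hy.1
    rw [Finset.sum_const, nsmul_eq_mul]
    have : ((if j = i then 1 else m' j i : ℕ) : ℝ)
        * ((univ.filter (fun x => x ⋖ y ∧ τ ≤ x)).card : ℝ) = (m' (j+1) i : ℝ) := by
      rw [← Nat.cast_mul, hcnt]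
    rw [← mul_assoc, this]
  -- telescoping: M j * S j = (prod of R) * π τ
  have htel : ∀ j, i ≤ j → j ≤ k + 1 →
      ((if j = i then 1 else m' j i : ℕ) : ℝ) * S j
        = (∏ l ∈ Finset.Icc (i+1) j, (R l : ℕ) : ℕ) * π τ := by
    intro j hij
    induction j, hij using Nat.le_induction with
    | base =>
      intro _
      simp [hSi]
    | succ j hij ih =>
      intro hj1
      have hjk : j ≤ k := by omega
      have hji : j + 1 ≠ i := by omega
      rw [if_neg hji, ← hrec j hij hjk]
      have := ih (by omega)
      rw [Finset.prod_Icc_succ_top (by omega : i + 1 ≤ j + 1)]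
      push_cast
      push_cast at this
      rw [mul_comm ((R (j+1) : ℝ)) (S j), ← mul_assoc, this]
      ring
  -- S k and S (k+1)
  have hmk : (if k = i then 1 else m' k i : ℕ) = m' k i := by
    by_cases h : k = i
    · subst h
      have h1 : m' k k * Rki = 1 := by
        rw [hRki]; simp
      rw [if_pos rfl, Nat.eq_one_of_mul_eq_one_right h1]
    · rw [if_neg h]
  have hmkR : (m' k i : ℝ) ≠ 0 := Nat.cast_ne_zero.mpr hmposk.ne'
  have hSk : S k = (Rki : ℝ) * π τ := by
    have h1 := htel k hik (by omega)
    rw [hmk] at h1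
    have h2 : ((∏ l ∈ Finset.Icc (i+1) k, R l : ℕ) : ℝ) = (m' k i : ℝ) * Rki := by
      rw [← hRki]; push_cast; ring
    rw [h2] at h1
    exact mul_left_cancel₀ hmkR (by rw [h1]; ring)
  have hmk1R : (m' (k+1) i : ℝ) ≠ 0 := by exact_mod_cast hmposk1.ne'
  have hSk1 : S (k + 1) = (Rk1i : ℝ) * π τ := by
    have h1 := htel (k+1) (by omega) le_rfl
    rw [if_neg (by omega : k + 1 ≠ i)] at h1
    have h2 : ((∏ l ∈ Finset.Icc (i+1) (k+1), R l : ℕ) : ℝ) = (m' (k+1) i : ℝ) * Rk1i := by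
      rw [← hRk1i]; push_cast; ring
    rw [h2] at h1
    exact mul_left_cancel₀ hmk1R (by rw [h1]; ring)
  -- positivity and the key product identity
  have hRk1pos : 0 < R (k+1) := hRpos (k+1) (by omega) (by omega)
  have hRne : ((R (k+1) : ℝ)) ≠ 0 := Nat.cast_ne_zero.mpr hRk1pos.ne'
  have hRkipos : 0 < Rki := by
    have hp : 0 < ∏ j ∈ Finset.Icc (i + 1) k, R j :=
      Finset.prod_pos (fun j hj => by
        simp only [Finset.mem_Icc] at hj
        exact hRpos j (by omega) (by omega))
    rw [← hRki] at hp
    exact Nat.pos_of_mul_pos_left (by rwa [mul_comm] at hp)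
  have hkey : m' (k+1) i * Rk1i = m' k i * Rki * R (k+1) := by
    rw [hRk1i, Finset.prod_Icc_succ_top (by omega : i + 1 ≤ k + 1), ← hRki]
  have hRk1ipos : 0 < Rk1i := by
    have : 0 < m' (k+1) i * Rk1i := by
      rw [hkey]; positivity
    exact Nat.pos_of_mul_pos_left (by rwa [mul_comm] at this)
  have hRkiNe : ((Rki : ℝ)) ≠ 0 := Nat.cast_ne_zero.mpr hRkipos.ne'
  have hRk1iNe : ((Rk1i : ℝ)) ≠ 0 := Nat.cast_ne_zero.mpr hRk1ipos.ne'
  have hkeyR : (m' (k+1) i : ℝ) * Rk1i = (m' k i : ℝ) * Rki * R (k+1) := by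
    exact_mod_cast congrArg (Nat.cast : ℕ → ℝ) hkey
  have hq2 : (m' (k+1) i : ℝ) / ((m' k i : ℝ) * (R (k+1) : ℝ)) = (Rki : ℝ) / (Rk1i : ℝ) := by
    rw [div_eq_div_iff (by positivity) (by positivity)]
    linear_combination hkeyR
  -- value of the up operator
  have hczero : ∀ y : X, ¬ τ ≤ y → univ.filter (fun x => x ⋖ y ∧ τ ≤ x) = ∅ := by
    intro y hy
    refine Finset.filter_eq_empty_iff.mpr ?_
    rintro x - ⟨hxy, hτx⟩
    exact hy (hτx.trans hxy.le)
  have hU : ∀ y : X, Uop r R (fun y => if τ ≤ y then (1:ℝ) else 0) y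
      = (1 / (R (r y) : ℝ)) * ((univ.filter (fun x => x ⋖ y ∧ τ ≤ x)).card : ℝ) := by
    intro y
    rw [Uop]
    congr 1
    rw [Finset.sum_boole, Finset.filter_filter]
  have hUy : ∀ y : X, r y = k + 1 → τ ≤ y →
      Uop r R (fun y => if τ ≤ y then (1:ℝ) else 0) y
        = (m' (k+1) i : ℝ) / ((m' k i : ℝ) * (R (k+1) : ℝ)) := by
    intro y hry hτy
    rw [hU y, hry]
    have hcnt := hcount k hik y hτy hry
    rw [hmk] at hcnt
    have hcc : (m' k i : ℝ) * ((univ.filter (fun x => x ⋖ y ∧ τ ≤ x)).card : ℝ)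
        = (m' (k+1) i : ℝ) := by exact_mod_cast congrArg (Nat.cast : ℕ → ℝ) hcnt
    rw [eq_div_iff (by positivity : ((m' k i : ℝ) * (R (k+1) : ℝ)) ≠ 0)]
    field_simp
    linear_combination hcc
  have hUy0 : ∀ y : X, ¬ τ ≤ y →
      Uop r R (fun y => if τ ≤ y then (1:ℝ) else 0) y = 0 := by
    intro y hy
    rw [hU y, hczero y hy]
    simp
  set U := Uop r R (fun y => if τ ≤ y then (1:ℝ) else 0) with hUdef
  set q : ℝ := (m' (k+1) i : ℝ) / ((m' k i : ℝ) * (R (k+1) : ℝ)) with hqdef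
  have hB : ip r π (k+1) U U = q^2 * ((Rk1i : ℝ) * π τ) := by
    rw [ip]
    have h1 : ∀ y ∈ univ.filter (fun y => r y = k+1), π y * U y * U y
        = if τ ≤ y then q^2 * π y else 0 := by
      intro y hy
      simp only [mem_filter, mem_univ, true_and] at hy
      by_cases hτy : τ ≤ y
      · rw [if_pos hτy, hUy y hy hτy]; ring
      · rw [if_neg hτy, hUy0 y hτy]; ring
    rw [Finset.sum_congr rfl h1, ← Finset.sum_filter, Finset.filter_filter]
    have h2 : ∑ y ∈ univ.filter (fun y => r y = k + 1 ∧ τ ≤ y), q^2 * π y = q^2 * S (k+1) := by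
      rw [hS, Finset.mul_sum]
    rw [h2, hSk1]
  have hA : ip r π k (fun y => if τ ≤ y then (1:ℝ) else 0) (Dop r R π U)
      = q * ((Rki : ℝ) * π τ) := by
    rw [ip]
    have h1 : ∀ x ∈ univ.filter (fun x => r x = k),
        π x * (if τ ≤ x then (1:ℝ) else 0) * (Dop r R π U x)
          = if τ ≤ x then q * π x else 0 := by
      intro x hx
      simp only [mem_filter, mem_univ, true_and] at hx
      by_cases hτx : τ ≤ x
      · rw [if_pos hτx, if_pos hτx, mul_one, Dop]
        have hin : ∑ y ∈ univ.filter (fun y => x ⋖ y), π y * U y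
            = q * ((R (k+1) : ℝ) * π x) := by
          have h2 : ∀ y ∈ univ.filter (fun y => x ⋖ y), π y * U y = q * π y := by
            intro y hy
            simp only [mem_filter, mem_univ, true_and] at hy
            have hry : r y = k + 1 := by rw [hcov x y hy, hx]
            rw [hUy y hry (hτx.trans hy.le)]; ring
          rw [Finset.sum_congr rfl h2, ← Finset.mul_sum, ← hmarg k hik le_rfl x hx]
        rw [hin, hx]
        by_cases hπx : π x = 0
        · rw [hπx]; ring
        · field_simp
      · rw [if_neg hτx, if_neg hτx]; ring
    rw [Finset.sum_congr rfl h1, ← Finset.sum_filter, Finset.filter_filter]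
    have h2 : ∑ x ∈ univ.filter (fun x => r x = k ∧ τ ≤ x), q * π x = q * S k := by
      rw [hS, Finset.mul_sum]
    rw [h2, hSk]
  have hC : ip r π k (fun y => if τ ≤ y then (1:ℝ) else 0) (fun y => if τ ≤ y then (1:ℝ) else 0)
      = (Rki : ℝ) * π τ := by
    rw [ip]
    have h1 : ∀ x ∈ univ.filter (fun x => r x = k),
        π x * (if τ ≤ x then (1:ℝ) else 0) * (if τ ≤ x then (1:ℝ) else 0)
          = if τ ≤ x then π x else 0 := by
      intro x _
      by_cases hτx : τ ≤ x <;> simp [hτx]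
    rw [Finset.sum_congr rfl h1, ← Finset.sum_filter, Finset.filter_filter]
    have h2 : ∑ x ∈ univ.filter (fun x => r x = k ∧ τ ≤ x), π x = S k := rfl
    rw [h2, hSk]
  refine ⟨?_, ?_, ?_⟩
  · rw [hA, hB, hq2]
    field_simp
  · rw [hB, hq2]
    field_simp
  · rw [hA, hC, hq2]
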